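/- For every real α ∈ (0,1) and all integers p ≥ q ≥ 1, one has (1/2)·((p+2)^α − (p+1)^α + q^α − (q+1)^α) ≤ (α(α−1)/2)·(p+1)^{α−2}. -/

import Mathlib

open Real Set

private lemma hasDerivAt_const_add_rpow (a c : ℝ) {t : ℝ} (h : a + t ≠ 0) :
    HasDerivAt (fun s : ℝ => (a + s) ^ c) (c * (a + t) ^ (c - 1)) t := by
  have h1 : HasDerivAt (fun s : ℝ => a + s) 1 t := (hasDerivAt_id t).const_add a
  have := (Real.hasDerivAt_rpow_const (x := a + t) (p := c) (Or.inl h)).comp t h1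
  convert this using 1 <;> first | rfl | simp

private lemma hasDerivAt_const_sub_rpow (a c : ℝ) {t : ℝ} (h : a - t ≠ 0) :
    HasDerivAt (fun s : ℝ => (a - s) ^ c) (-(c * (a - t) ^ (c - 1))) t := by
  have h1 : HasDerivAt (fun s : ℝ => a - s) (-1) t := (hasDerivAt_id t).const_sub a
  have := (Real.hasDerivAt_rpow_const (x := a - t) (p := c) (Or.inl h)).comp t h1
  convert this using 1 <;> first | rfl | simp [mul_comm]

private lemma hasDerivAt_add_one_rpow (c : ℝ) {x : ℝ} (h : x + 1 ≠ 0) :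
    HasDerivAt (fun s : ℝ => (s + 1) ^ c) (c * (x + 1) ^ (c - 1)) x := by
  have h1 : HasDerivAt (fun s : ℝ => s + 1) 1 x := (hasDerivAt_id x).add_const 1
  have := (Real.hasDerivAt_rpow_const (x := x + 1) (p := c) (Or.inl h)).comp x h1
  convert this using 1 <;> first | rfl | simp

/-- midpoint convexity of `x ^ β` for `β ≤ 0`. -/
private lemma midpoint_rpow {β a t : ℝ} (hβ : β ≤ 0) (ha : 2 ≤ a)
    (ht0 : 0 ≤ t) (ht1 : t ≤ 1) :
    2 * a ^ β ≤ (a - t) ^ β + (a + t) ^ β := by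
  have hmono : MonotoneOn (fun s : ℝ => (a + s) ^ β + (a - s) ^ β) (Icc 0 1) := by
    apply monotoneOn_of_hasDerivWithinAt_nonneg (convex_Icc 0 1)
      (f' := fun s => β * (a + s) ^ (β - 1) - β * (a - s) ^ (β - 1))
    · intro s hs
      have h1 : a + s ≠ 0 := by have := hs.1; nlinarith [hs.2]
      have h2 : a - s ≠ 0 := by nlinarith [hs.1, hs.2]
      exact ((hasDerivAt_const_add_rpow a β h1).add
        (hasDerivAt_const_sub_rpow a β h2)).continuousAt.continuousWithinAt
    · intro s hs
      rw [interior_Icc] at hs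
      have h1 : a + s ≠ 0 := by nlinarith [hs.1, hs.2]
      have h2 : a - s ≠ 0 := by nlinarith [hs.1, hs.2]
      exact (((hasDerivAt_const_add_rpow a β h1).add
        (hasDerivAt_const_sub_rpow a β h2)).congr_deriv (by ring)).hasDerivWithinAt
    · intro s hs
      rw [interior_Icc] at hs
      have h2 : (0:ℝ) < a - s := by nlinarith [hs.1, hs.2]
      have hle : (a + s) ^ (β - 1) ≤ (a - s) ^ (β - 1) := by
        apply Real.rpow_le_rpow_of_nonpos h2 (by linarith [hs.1]) (by linarith)
      nlinarith [mul_nonneg (neg_nonneg.2 hβ) (sub_nonneg.2 hle)]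
  have := hmono (left_mem_Icc.2 zero_le_one) ⟨ht0, ht1⟩ ht0
  simp only [add_zero, sub_zero] at this
  linarith

/-- second difference bound. -/
private lemma second_diff_bound {α a : ℝ} (hα0 : 0 < α) (hα1 : α < 1) (ha : 2 ≤ a) :
    (a + 1) ^ α + (a - 1) ^ α - 2 * a ^ α ≤ α * (α - 1) * a ^ (α - 2) := by
  set K : ℝ := α * (α - 1) * a ^ (α - 2) with hK
  have ha0 : (0:ℝ) < a := by linarith
  -- f2 is the derivative of f1; show f2 ≤ 0 on [0,1]
  have hf2anti : AntitoneOn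
      (fun t : ℝ => α * (a + t) ^ (α - 1) - α * (a - t) ^ (α - 1) - 2 * K * t) (Icc 0 1) := by
    apply antitoneOn_of_hasDerivWithinAt_nonpos (convex_Icc 0 1)
      (f' := fun t => α * (α - 1) * (a + t) ^ (α - 2)
        + α * (α - 1) * (a - t) ^ (α - 2) - 2 * K)
    · intro t ht
      have h1 : a + t ≠ 0 := by nlinarith [ht.1, ht.2]
      have h2 : a - t ≠ 0 := by nlinarith [ht.1, ht.2]
      have hd := (((hasDerivAt_const_add_rpow a (α - 1) h1).const_mul α).sub
        ((hasDerivAt_const_sub_rpow a (α - 1) h2).const_mul α)).sub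
        (((hasDerivAt_id t).const_mul (2 * K)))
      exact hd.continuousAt.continuousWithinAt
    · intro t ht
      rw [interior_Icc] at ht
      have h1 : a + t ≠ 0 := by nlinarith [ht.1, ht.2]
      have h2 : a - t ≠ 0 := by nlinarith [ht.1, ht.2]
      have hd := (((hasDerivAt_const_add_rpow a (α - 1) h1).const_mul α).sub
        ((hasDerivAt_const_sub_rpow a (α - 1) h2).const_mul α)).sub
        (((hasDerivAt_id t).const_mul (2 * K)))
      have e : α - 1 - 1 = α - 2 := by ring
      refine (hd.congr_deriv ?_).hasDerivWithinAt
      rw [e]; ring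
    · intro t ht
      rw [interior_Icc] at ht
      have hmid := midpoint_rpow (β := α - 2) (a := a) (t := t) (by linarith) ha
        ht.1.le ht.2.le
      have hneg : α * (α - 1) ≤ 0 := by nlinarith
      rw [hK]
      nlinarith [mul_nonneg (neg_nonneg.2 hneg)
        (sub_nonneg.2 hmid)]
  have hf2_zero : (fun t : ℝ => α * (a + t) ^ (α - 1) - α * (a - t) ^ (α - 1) - 2 * K * t) 0
      = 0 := by simp
  have hf2le : ∀ t ∈ Icc (0:ℝ) 1,
      α * (a + t) ^ (α - 1) - α * (a - t) ^ (α - 1) - 2 * K * t ≤ 0 := by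
    intro t ht
    have := hf2anti (left_mem_Icc.2 zero_le_one) ht ht.1
    rw [hf2_zero] at this
    exact this
  -- f1 antitone on [0,1]
  have hf1anti : AntitoneOn
      (fun t : ℝ => (a + t) ^ α + (a - t) ^ α - (2 * a ^ α + K * t ^ 2)) (Icc 0 1) := by
    apply antitoneOn_of_hasDerivWithinAt_nonpos (convex_Icc 0 1)
      (f' := fun t => α * (a + t) ^ (α - 1) - α * (a - t) ^ (α - 1) - 2 * K * t)
    · intro t ht
      have h1 : a + t ≠ 0 := by nlinarith [ht.1, ht.2]
      have h2 : a - t ≠ 0 := by nlinarith [ht.1, ht.2]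
      have hd := ((hasDerivAt_const_add_rpow a α h1).add
        (hasDerivAt_const_sub_rpow a α h2)).sub
        ((hasDerivAt_pow 2 t).const_mul K |>.const_add (2 * a ^ α))
      exact hd.continuousAt.continuousWithinAt
    · intro t ht
      rw [interior_Icc] at ht
      have h1 : a + t ≠ 0 := by nlinarith [ht.1, ht.2]
      have h2 : a - t ≠ 0 := by nlinarith [ht.1, ht.2]
      have hd := ((hasDerivAt_const_add_rpow a α h1).add
        (hasDerivAt_const_sub_rpow a α h2)).sub
        ((hasDerivAt_pow 2 t).const_mul K |>.const_add (2 * a ^ α))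
      exact (hd.congr_deriv (by push_cast; ring)).hasDerivWithinAt
    · intro t ht
      rw [interior_Icc] at ht
      exact hf2le t ⟨ht.1.le, ht.2.le⟩
  have := hf1anti (left_mem_Icc.2 zero_le_one) (right_mem_Icc.2 zero_le_one) zero_le_one
  simp only [add_zero, sub_zero] at this
  nlinarith [this]

/-- monotonicity of `x ↦ x^α - (x+1)^α` on `[1, ∞)`. -/
private lemma diff_mono {α : ℝ} (hα0 : 0 < α) (hα1 : α < 1) {x y : ℝ}
    (hx : 1 ≤ x) (hxy : x ≤ y) :
    x ^ α - (x + 1) ^ α ≤ y ^ α - (y + 1) ^ α := by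
  have hmono : MonotoneOn (fun x : ℝ => x ^ α - (x + 1) ^ α) (Ici 1) := by
    apply monotoneOn_of_hasDerivWithinAt_nonneg (convex_Ici 1)
      (f' := fun x => α * x ^ (α - 1) - α * (x + 1) ^ (α - 1))
    · intro x hx
      have hx1 : (1:ℝ) ≤ x := hx
      have h1 : x ≠ 0 := by linarith
      have h2 : x + 1 ≠ 0 := by linarith
      have hd := (Real.hasDerivAt_rpow_const (x := x) (p := α) (Or.inl h1)).sub
        (hasDerivAt_add_one_rpow α h2)
      exact hd.continuousAt.continuousWithinAt
    · intro x hx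
      rw [interior_Ici] at hx
      have hx1 : (1:ℝ) < x := hx
      have h1 : x ≠ 0 := by linarith
      have hd := (Real.hasDerivAt_rpow_const (x := x) (p := α) (Or.inl h1)).sub
        (hasDerivAt_add_one_rpow α (by linarith))
      exact hd.hasDerivWithinAt
    · intro x hx
      rw [interior_Ici] at hx
      have hx1 : (1:ℝ) < x := hx
      have hle : (x + 1) ^ (α - 1) ≤ x ^ (α - 1) :=
        Real.rpow_le_rpow_of_nonpos (by linarith) (by linarith) (by linarith)
      nlinarith [mul_nonneg hα0.le (sub_nonneg.2 hle)]
  exact hmono hx (le_trans hx hxy) hxy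

/-- for `α ∈ (0,1)` and integers `p ≥ q ≥ 1`,
`(1/2)((p+2)^α - (p+1)^α + q^α - (q+1)^α) ≤ (α(α-1)/2)(p+1)^{α-2}` (real powers). -/
theorem paired_flips_bound (α : ℝ) (hα : α ∈ Set.Ioo (0 : ℝ) 1)
    (p q : ℕ) (hq : 1 ≤ q) (hpq : q ≤ p) :
    (1 / 2 : ℝ) * (((p : ℝ) + 2) ^ α - ((p : ℝ) + 1) ^ α
        + (q : ℝ) ^ α - ((q : ℝ) + 1) ^ α)
      ≤ α * (α - 1) / 2 * ((p : ℝ) + 1) ^ (α - 2) := by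
  obtain ⟨hα0, hα1⟩ := hα
  have hq' : (1:ℝ) ≤ (q:ℝ) := by exact_mod_cast hq
  have hpq' : (q:ℝ) ≤ (p:ℝ) := by exact_mod_cast hpq
  have hp1 : (1:ℝ) ≤ (p:ℝ) := le_trans hq' hpq'
  have hA : (q:ℝ) ^ α - ((q:ℝ) + 1) ^ α ≤ (p:ℝ) ^ α - ((p:ℝ) + 1) ^ α :=
    diff_mono hα0 hα1 hq' hpq'
  have hB := second_diff_bound (a := (p:ℝ) + 1) hα0 hα1 (by linarith)
  have e1 : (p:ℝ) + 1 + 1 = (p:ℝ) + 2 := by ring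
  have e2 : (p:ℝ) + 1 - 1 = (p:ℝ) := by ring
  rw [e1, e2] at hB
  linarith
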